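/- Let n ≥ 1. For all permutations β₁,…,β₉ of {1,…,2n}, the lattice functional F(β) := 4|γ_{n,n}⁻¹β₅| + |γ_{n,n}⁻¹β₄| + |γ_{n,n}⁻¹β₆| + 2(|β₁| + |β₃| + |β₄| + |β₆| + |β₇| + |β₉|) + 3(|β₂| + |β₈|) + Σ_{(i,j)∈E} |β_i⁻¹β_j|, where E = {(1,2),(2,3),(4,5),(5,6),(7,8),(8,9),(1,4),(4,7),(2,5),(5,8),(3,6),(6,9)}, satisfies F(β) ≥ 6(2n − 2). -/

import Mathlib

/-!
For a permutation `σ` of a finite set of size `m`, `cycleCount σ` is the number of cycles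
(fixed points count as cycles) and `permLen σ = m - cycleCount σ` (the minimal number of
transpositions needed to write `σ`).  We model `{1,…,2n}` as `Fin n ⊕ Fin n`, the first
summand being `{1,…,n}` and the second `{n+1,…,2n}`.  `gammaNN n` is the product of the
two `n`-cycles `(1,2,…,n)` and `(n+1,…,2n)`.
-/

/-- The number of cycles of a permutation, where fixed points count as cycles. -/
noncomputable def cycleCount {α : Type*} [Fintype α] [DecidableEq α]
    (σ : Equiv.Perm α) : ℕ :=
  Multiset.card σ.cycleType + (Fintype.card α - σ.support.card)

/-- `|σ| = m - #(σ)`, the minimal number of transpositions whose product is `σ`. -/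
noncomputable def permLen {α : Type*} [Fintype α] [DecidableEq α]
    (σ : Equiv.Perm α) : ℕ :=
  Fintype.card α - cycleCount σ

/-- `γ_{n,n}`: the product of the two `n`-cycles `(1,…,n)` and `(n+1,…,2n)`. -/
def gammaNN (n : ℕ) : Equiv.Perm (Fin n ⊕ Fin n) :=
  Equiv.sumCongr (finRotate n) (finRotate n)

/-- A permutation of `{1,…,2n}` is connected if some cycle of it contains both an
element of `{1,…,n}` and an element of `{n+1,…,2n}`. -/
def IsConnectedPerm {n : ℕ} (β : Equiv.Perm (Fin n ⊕ Fin n)) : Prop :=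
  ∃ a b : Fin n, β.SameCycle (Sum.inl a) (Sum.inr b)

set_option linter.unusedSectionVars false

section Aux

open Equiv Equiv.Perm Finset

variable {α : Type*} [Fintype α] [DecidableEq α]

lemma card_cycleType_le_support (σ : Equiv.Perm α) :
    Multiset.card σ.cycleType ≤ σ.support.card := by
  calc Multiset.card σ.cycleType = Multiset.card σ.cycleType • 1 := by simp
  _ ≤ σ.cycleType.sum := Multiset.card_nsmul_le_sum (fun x hx => (two_le_of_mem_cycleType hx).trans' (by omega))
  _ = σ.support.card := σ.sum_cycleType

lemma permLen_eq (σ : Equiv.Perm α) :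
    permLen σ = σ.support.card - Multiset.card σ.cycleType := by
  have h1 := card_cycleType_le_support σ
  have h2 : σ.support.card ≤ Fintype.card α := Finset.card_le_univ _
  unfold permLen cycleCount
  omega

@[simp] lemma permLen_one : permLen (1 : Equiv.Perm α) = 0 := by
  simp [permLen_eq]

@[simp] lemma permLen_inv (σ : Equiv.Perm α) : permLen σ⁻¹ = permLen σ := by
  simp [permLen_eq, cycleType_inv]

lemma permLen_mul_of_disjoint {σ τ : Equiv.Perm α} (h : Equiv.Perm.Disjoint σ τ) :
    permLen (σ * τ) = permLen σ + permLen τ := by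
  have h1 := card_cycleType_le_support σ
  have h2 := card_cycleType_le_support τ
  rw [permLen_eq, permLen_eq, permLen_eq, h.cycleType_mul, h.card_support_mul]
  simp only [Multiset.card_add]
  omega

lemma permLen_isCycle {σ : Equiv.Perm α} (h : σ.IsCycle) :
    permLen σ = σ.support.card - 1 := by
  rw [permLen_eq, h.cycleType]
  simp

lemma permLen_swap_mul_eq {σ : Equiv.Perm α} {x : α} (hx : σ x ≠ x) :
    permLen σ = permLen (Equiv.swap x (σ x) * σ) + 1 := by
  set c := σ.cycleOf x with hc_def
  have hc : c ∈ σ.cycleFactorsFinset := cycleOf_mem_cycleFactorsFinset_iff.2 (mem_support.2 hx)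
  have hcyc : c.IsCycle := isCycle_cycleOf σ hx
  have hcx : c x = σ x := cycleOf_apply_self σ x
  have hcxx : c x ≠ x := by rw [hcx]; exact hx
  have hxc : x ∈ c.support := mem_support.2 hcxx
  have hsxc : σ x ∈ c.support := by rw [← hcx]; exact apply_mem_support.2 hxc
  have hd : Equiv.Perm.Disjoint (σ * c⁻¹) c := disjoint_mul_inv_of_mem_cycleFactorsFinset hc
  have hswap_supp : (Equiv.swap x (σ x)).support ⊆ c.support := by
    rw [support_swap (Ne.symm hx)]
    intro y hy
    simp only [Finset.mem_insert, Finset.mem_singleton] at hy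
    rcases hy with rfl | rfl
    · exact hxc
    · exact hsxc
  have hd3 : Equiv.Perm.Disjoint (σ * c⁻¹) (Equiv.swap x (σ x)) := by
    rw [disjoint_iff_disjoint_support] at hd ⊢
    exact hd.mono_right hswap_supp
  have hd2 : Equiv.Perm.Disjoint (σ * c⁻¹) (Equiv.swap x (σ x) * c) := by
    rw [disjoint_iff_disjoint_support] at hd hd3 ⊢
    exact Finset.disjoint_left.2 (fun a ha => by
      have := support_mul_le (Equiv.swap x (σ x)) c
      intro hmem
      have := this hmem
      simp only [Finset.sup_eq_union, Finset.mem_union] at this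
      rcases this with h | h
      · exact Finset.disjoint_left.1 hd3 ha h
      · exact Finset.disjoint_left.1 hd ha h)
  have hσ : σ = (σ * c⁻¹) * c := by group
  have hkey : (σ * c⁻¹) * (Equiv.swap x (σ x) * c) = Equiv.swap x (σ x) * σ := by
    rw [← mul_assoc, hd3.commute.eq, mul_assoc, ← hσ]
  have h2le : 2 ≤ c.support.card := hcyc.two_le_card_support
  have e1 : permLen σ = permLen (σ * c⁻¹) + permLen c := by
    conv_lhs => rw [hσ]
    exact permLen_mul_of_disjoint hd
  have e2 : permLen (Equiv.swap x (σ x) * σ) =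
      permLen (σ * c⁻¹) + permLen (Equiv.swap x (σ x) * c) := by
    rw [← hkey, permLen_mul_of_disjoint hd2]
  by_cases h2 : c (c x) = x
  · have hceq : c = Equiv.swap x (c x) := hcyc.eq_swap_of_apply_apply_eq_self hcxx h2
    have : Equiv.swap x (σ x) * c = 1 := by
      rw [hceq, ← hcx]; exact Equiv.swap_mul_self _ _
    rw [e1, e2, this, permLen_one, permLen_isCycle hcyc]
    have : c.support.card = 2 := by rw [hceq]; exact card_support_swap (Ne.symm hcxx)
    omega
  · have hcyc' : (Equiv.swap x (c x) * c).IsCycle := hcyc.swap_mul hcxx h2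
    have hsupp' : (Equiv.swap x (c x) * c).support = c.support \ {x} :=
      support_swap_mul_eq c x h2
    rw [e1, e2, permLen_isCycle hcyc, ← hcx, permLen_isCycle hcyc', hsupp',
      Finset.card_sdiff_of_subset (by simpa using hxc), Finset.card_singleton]
    omega

lemma permLen_swap_mul_fixed {σ : Equiv.Perm α} {a b : α} (ha : σ a = a) (hab : a ≠ b) :
    permLen (Equiv.swap a b * σ) = permLen σ + 1 := by
  set τ := Equiv.swap a b * σ with hτ
  have hτa : τ a = b := by simp [hτ, ha]
  have h1 : τ a ≠ a := by rw [hτa]; exact Ne.symm hab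
  have := permLen_swap_mul_eq h1
  rw [hτa] at this
  have h2 : Equiv.swap a b * τ = σ := by
    rw [hτ, ← mul_assoc, Equiv.swap_mul_self, one_mul]
  rw [h2] at this
  omega

lemma swap_mul_swap_eq {a b c : α} (hab : a ≠ b) (hac : a ≠ c) (hbc : b ≠ c) :
    Equiv.swap a b * Equiv.swap a c = Equiv.swap a c * Equiv.swap c b := by
  ext x
  simp only [Equiv.Perm.mul_apply, Equiv.swap_apply_def]
  split_ifs <;> simp_all

lemma permLen_swap_mul_le (k : ℕ) : ∀ (σ : Equiv.Perm α), σ.support.card ≤ k →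
    ∀ a b : α, a ≠ b → permLen (Equiv.swap a b * σ) ≤ permLen σ + 1 := by
  induction k with
  | zero =>
    intro σ hσ a b hab
    have : σ = 1 := by
      rw [← Equiv.Perm.support_eq_empty_iff, ← Finset.card_eq_zero]; omega
    subst this
    rw [mul_one, permLen_one]
    have : Equiv.Perm.IsCycle (Equiv.swap a b) := isCycle_swap hab
    rw [permLen_isCycle this, card_support_swap hab]
  | succ k ih =>
    intro σ hσ a b hab
    by_cases hb : σ a = b
    · have hxa : σ a ≠ a := by rw [hb]; exact Ne.symm hab
      have := permLen_swap_mul_eq hxa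
      rw [hb] at this
      omega
    by_cases ha : σ a = a
    · exact le_of_eq (permLen_swap_mul_fixed ha hab)
    · set c := σ a with hc
      have hac : a ≠ c := fun h => ha h.symm
      have hcb : c ≠ b := hb
      set σ' := Equiv.swap a c * σ with hσ'
      have hcard : σ'.support.card < σ.support.card := card_support_swap_mul ha
      have hB : permLen σ = permLen σ' + 1 := permLen_swap_mul_eq ha
      set ρ := Equiv.swap c b * σ' with hρ
      have hih : permLen ρ ≤ permLen σ' + 1 := ih σ' (by omega) c b hcb
      have hσ'a : σ' a = a := by
        rw [hσ', Equiv.Perm.mul_apply, ← hc, Equiv.swap_apply_right]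
      have hρa : ρ a = a := by
        rw [hρ, Equiv.Perm.mul_apply, hσ'a, Equiv.swap_apply_of_ne_of_ne hac hab]
      have hfp : permLen (Equiv.swap a c * ρ) = permLen ρ + 1 :=
        permLen_swap_mul_fixed hρa hac
      have hkey : Equiv.swap a b * σ = Equiv.swap a c * ρ := by
        have h1 : σ = Equiv.swap a c * σ' := by
          rw [hσ', ← mul_assoc, Equiv.swap_mul_self, one_mul]
        calc Equiv.swap a b * σ = (Equiv.swap a b * Equiv.swap a c) * σ' := by
              rw [mul_assoc, ← h1]
        _ = (Equiv.swap a c * Equiv.swap c b) * σ' := by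
              rw [swap_mul_swap_eq hab hac (Ne.symm hcb)]
        _ = Equiv.swap a c * ρ := by rw [mul_assoc, hρ]
      rw [hkey, hfp]
      omega

lemma cycle_swap_factors (k : ℕ) : ∀ (σ : Equiv.Perm α), σ.support.card ≤ k → σ.IsCycle →
    ∃ l : List (Equiv.Perm α), (∀ s ∈ l, Equiv.Perm.IsSwap s) ∧ l.prod = σ ∧
      l.length + 1 = σ.support.card := by
  induction k with
  | zero =>
    intro σ hσ hc
    exact absurd hσ (by have := hc.two_le_card_support; omega)
  | succ k ih =>
    intro σ hσ hc
    obtain ⟨x, hx, -⟩ := id hc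
    by_cases h2 : σ (σ x) = x
    · have hceq : σ = Equiv.swap x (σ x) := hc.eq_swap_of_apply_apply_eq_self hx h2
      refine ⟨[Equiv.swap x (σ x)], ?_, by simp [← hceq], ?_⟩
      · intro s hs; simp at hs; exact ⟨x, σ x, Ne.symm hx, hs⟩
      · conv_rhs => rw [hceq]
        rw [card_support_swap (Ne.symm hx)]
        rfl
    · set σ' := Equiv.swap x (σ x) * σ with hσ'
      have hc' : σ'.IsCycle := hc.swap_mul hx h2
      have hsupp' : σ'.support = σ.support \ {x} := support_swap_mul_eq σ x h2
      have hxs : x ∈ σ.support := mem_support.2 hx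
      have hcard' : σ'.support.card = σ.support.card - 1 := by
        rw [hsupp', Finset.card_sdiff_of_subset (by simpa using hxs), Finset.card_singleton]
      have h2le : 2 ≤ σ.support.card := hc.two_le_card_support
      obtain ⟨l, hl1, hl2, hl3⟩ := ih σ' (by omega) hc'
      refine ⟨Equiv.swap x (σ x) :: l, ?_, ?_, ?_⟩
      · intro s hs
        rcases List.mem_cons.1 hs with rfl | hs
        · exact ⟨x, σ x, Ne.symm hx, rfl⟩
        · exact hl1 s hs
      · rw [List.prod_cons, hl2, hσ', ← mul_assoc, Equiv.swap_mul_self, one_mul]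
      · simp only [List.length_cons]
        omega

lemma exists_swap_factors (σ : Equiv.Perm α) :
    ∃ l : List (Equiv.Perm α), (∀ s ∈ l, Equiv.Perm.IsSwap s) ∧ l.prod = σ ∧
      l.length = permLen σ := by
  induction σ using Equiv.Perm.cycle_induction_on with
  | base_one => exact ⟨[], by simp⟩
  | base_cycles σ hσ =>
    obtain ⟨l, h1, h2, h3⟩ := cycle_swap_factors σ.support.card σ le_rfl hσ
    exact ⟨l, h1, h2, by rw [permLen_isCycle hσ]; omega⟩
  | induction_disjoint σ τ hd hc hσ hτ =>
    obtain ⟨l1, h11, h12, h13⟩ := hσ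
    obtain ⟨l2, h21, h22, h23⟩ := hτ
    refine ⟨l1 ++ l2, ?_, by rw [List.prod_append, h12, h22], ?_⟩
    · intro s hs; rcases List.mem_append.1 hs with h | h
      · exact h11 s h
      · exact h21 s h
    · rw [List.length_append, permLen_mul_of_disjoint hd, h13, h23]

lemma permLen_mul_swap_le (σ : Equiv.Perm α) {s : Equiv.Perm α} (hs : s.IsSwap) :
    permLen (σ * s) ≤ permLen σ + 1 := by
  obtain ⟨a, b, hab, rfl⟩ := hs
  have : σ * Equiv.swap a b = (Equiv.swap a b * σ⁻¹)⁻¹ := by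
    rw [mul_inv_rev, inv_inv, Equiv.swap_inv]
  rw [this, permLen_inv]
  calc permLen (Equiv.swap a b * σ⁻¹) ≤ permLen σ⁻¹ + 1 :=
        permLen_swap_mul_le _ σ⁻¹ le_rfl a b hab
  _ = permLen σ + 1 := by rw [permLen_inv]

lemma permLen_mul_list_le (l : List (Equiv.Perm α)) (hl : ∀ s ∈ l, Equiv.Perm.IsSwap s) :
    ∀ σ : Equiv.Perm α, permLen (σ * l.prod) ≤ permLen σ + l.length := by
  induction l with
  | nil => intro σ; simp
  | cons s l ih =>
    intro σ
    rw [List.prod_cons, ← mul_assoc]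
    calc permLen (σ * s * l.prod) ≤ permLen (σ * s) + l.length :=
          ih (fun t ht => hl t (List.mem_cons_of_mem s ht)) (σ * s)
    _ ≤ permLen σ + 1 + l.length := by
          have := permLen_mul_swap_le σ (hl s (List.mem_cons_self (a := s) (l := l)))
          omega
    _ = permLen σ + (s :: l).length := by rw [List.length_cons]; omega

lemma permLen_mul_le (σ τ : Equiv.Perm α) :
    permLen (σ * τ) ≤ permLen σ + permLen τ := by
  obtain ⟨l, h1, h2, h3⟩ := exists_swap_factors τ
  rw [← h3, ← h2]
  exact permLen_mul_list_le l h1 σ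

section SumCongr

variable {A B : Type*} [Fintype A] [Fintype B] [DecidableEq A] [DecidableEq B]

lemma sumCongr_zpow_apply_inl (f : Equiv.Perm A) (g : Equiv.Perm B) (i : ℤ) (a : A) :
    ((Equiv.sumCongr f g : Equiv.Perm (A ⊕ B)) ^ i) (Sum.inl a) = Sum.inl ((f ^ i) a) := by
  have : (Equiv.sumCongr f g : Equiv.Perm (A ⊕ B)) ^ i
      = Equiv.sumCongr (f ^ i) (g ^ i) := by
    have h1 : (Equiv.sumCongr f g : Equiv.Perm (A ⊕ B)) = Equiv.Perm.sumCongrHom A B (f, g) := rfl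
    rw [h1, ← map_zpow]
    rfl
  rw [this]
  rfl

lemma sumCongr_zpow_apply_inr (f : Equiv.Perm A) (g : Equiv.Perm B) (i : ℤ) (b : B) :
    ((Equiv.sumCongr f g : Equiv.Perm (A ⊕ B)) ^ i) (Sum.inr b) = Sum.inr ((g ^ i) b) := by
  have : (Equiv.sumCongr f g : Equiv.Perm (A ⊕ B)) ^ i
      = Equiv.sumCongr (f ^ i) (g ^ i) := by
    have h1 : (Equiv.sumCongr f g : Equiv.Perm (A ⊕ B)) = Equiv.Perm.sumCongrHom A B (f, g) := rfl
    rw [h1, ← map_zpow]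
    rfl
  rw [this]
  rfl

lemma isCycle_sumCongr_left {f : Equiv.Perm A} (hf : f.IsCycle) :
    Equiv.Perm.IsCycle (Equiv.sumCongr f (1 : Equiv.Perm B) : Equiv.Perm (A ⊕ B)) := by
  obtain ⟨x, hx, hsp⟩ := hf
  refine ⟨Sum.inl x, by simpa using hx, ?_⟩
  rintro (a | b) hy
  · obtain ⟨i, hi⟩ := hsp (y := a) (by simpa using hy)
    exact ⟨i, by rw [sumCongr_zpow_apply_inl, hi]⟩
  · simp at hy

lemma isCycle_sumCongr_right {g : Equiv.Perm B} (hg : g.IsCycle) :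
    Equiv.Perm.IsCycle (Equiv.sumCongr (1 : Equiv.Perm A) g : Equiv.Perm (A ⊕ B)) := by
  obtain ⟨x, hx, hsp⟩ := hg
  refine ⟨Sum.inr x, by simpa using hx, ?_⟩
  rintro (a | b) hy
  · simp at hy
  · obtain ⟨i, hi⟩ := hsp (y := b) (by simpa using hy)
    exact ⟨i, by rw [sumCongr_zpow_apply_inr, hi]⟩

end SumCongr

lemma permLen_gammaNN {n : ℕ} (hn : 2 ≤ n) : 2 * n - 2 ≤ permLen (gammaNN n) := by
  set f := finRotate n with hf
  have hfc : f.IsCycle := isCycle_finRotate_of_le hn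
  have hsupp : ∀ x : Fin n, f x ≠ x := by
    intro x
    have : x ∈ f.support := by rw [hf, support_finRotate_of_le hn]; exact Finset.mem_univ x
    exact mem_support.1 this
  have hdec : gammaNN n = (Equiv.sumCongr f (1 : Equiv.Perm (Fin n)) : Equiv.Perm (Fin n ⊕ Fin n))
      * (Equiv.sumCongr (1 : Equiv.Perm (Fin n)) f) := by
    rw [Equiv.Perm.sumCongr_mul, mul_one, one_mul]
    rfl
  have hd : Equiv.Perm.Disjoint
      (Equiv.sumCongr f (1 : Equiv.Perm (Fin n)) : Equiv.Perm (Fin n ⊕ Fin n))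
      (Equiv.sumCongr (1 : Equiv.Perm (Fin n)) f) := by
    rintro (a | b)
    · right; rfl
    · left; rfl
  have hc1 := isCycle_sumCongr_left (B := Fin n) hfc
  have hc2 := isCycle_sumCongr_right (A := Fin n) hfc
  have hct : Multiset.card (gammaNN n).cycleType = 2 := by
    rw [hdec, hd.cycleType_mul, Multiset.card_add, hc1.cycleType, hc2.cycleType]
    rfl
  have hsp : (gammaNN n).support = Finset.univ := by
    ext x
    simp only [Finset.mem_univ, iff_true, mem_support]
    cases x with
    | inl a => exact fun h => hsupp a (by simpa [gammaNN, hf] using h)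
    | inr b => exact fun h => hsupp b (by simpa [gammaNN, hf] using h)
  have hcard : (Finset.univ : Finset (Fin n ⊕ Fin n)).card = 2 * n := by
    simp [Finset.card_univ, two_mul]
  rw [permLen_eq, hct, hsp, hcard]

lemma permLen_le_three (g a b c : Equiv.Perm α) (h : a * (b * c) = g) :
    permLen g ≤ permLen a + permLen b + permLen c := by
  rw [← h]
  have h1 := permLen_mul_le a (b * c)
  have h2 := permLen_mul_le b c
  omega

lemma permLen_le_four (g a b c d : Equiv.Perm α) (h : a * (b * (c * d)) = g) :
    permLen g ≤ permLen a + permLen b + permLen c + permLen d := by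
  rw [← h]
  have h1 := permLen_mul_le a (b * (c * d))
  have h2 := permLen_mul_le b (c * d)
  have h3 := permLen_mul_le c d
  omega

lemma permLen_inv_mul_comm (x y : Equiv.Perm α) :
    permLen (x⁻¹ * y) = permLen (y⁻¹ * x) := by
  rw [← permLen_inv (x⁻¹ * y), mul_inv_rev, inv_inv]


end Aux

/-- The lattice functional for the 3×3 grid:
`F(β) = 4|γ_{n,n}⁻¹β₅| + |γ_{n,n}⁻¹β₄| + |γ_{n,n}⁻¹β₆|
  + 2(|β₁| + |β₃| + |β₄| + |β₆| + |β₇| + |β₉|) + 3(|β₂| + |β₈|)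
  + Σ_{(i,j)∈E} |βᵢ⁻¹βⱼ|` over the twelve grid edges `E`. -/
noncomputable def latticeF {n : ℕ}
    (b₁ b₂ b₃ b₄ b₅ b₆ b₇ b₈ b₉ : Equiv.Perm (Fin n ⊕ Fin n)) : ℕ :=
  4 * permLen ((gammaNN n)⁻¹ * b₅) + permLen ((gammaNN n)⁻¹ * b₄)
    + permLen ((gammaNN n)⁻¹ * b₆)
    + 2 * (permLen b₁ + permLen b₃ + permLen b₄ + permLen b₆ + permLen b₇ + permLen b₉)
    + 3 * (permLen b₂ + permLen b₈)
    + (permLen (b₁⁻¹ * b₂) + permLen (b₂⁻¹ * b₃) + permLen (b₄⁻¹ * b₅)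
      + permLen (b₅⁻¹ * b₆) + permLen (b₇⁻¹ * b₈) + permLen (b₈⁻¹ * b₉)
      + permLen (b₁⁻¹ * b₄) + permLen (b₄⁻¹ * b₇) + permLen (b₂⁻¹ * b₅)
      + permLen (b₅⁻¹ * b₈) + permLen (b₃⁻¹ * b₆) + permLen (b₆⁻¹ * b₉))

theorem latticeF_ge (n : ℕ) (hn : 1 ≤ n)
    (b₁ b₂ b₃ b₄ b₅ b₆ b₇ b₈ b₉ : Equiv.Perm (Fin n ⊕ Fin n)) :
    6 * (2 * n - 2) ≤ latticeF b₁ b₂ b₃ b₄ b₅ b₆ b₇ b₈ b₉ := by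
  rcases Nat.lt_or_ge n 2 with h2 | h2
  · have h0 : 2 * n - 2 = 0 := by omega
    rw [h0]
    simp
  · have hG : 2 * n - 2 ≤ permLen (gammaNN n) := permLen_gammaNN h2
    have c1 : permLen (gammaNN n) ≤ permLen b₁ + permLen (b₁⁻¹ * b₄)
        + permLen (b₄⁻¹ * gammaNN n) :=
      permLen_le_three _ _ _ _ (by group)
    have c2 : permLen (gammaNN n) ≤ permLen b₃ + permLen (b₃⁻¹ * b₆)
        + permLen (b₆⁻¹ * gammaNN n) :=
      permLen_le_three _ _ _ _ (by group)
    have c5 : permLen (gammaNN n) ≤ permLen b₂ + permLen (b₂⁻¹ * b₅)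
        + permLen (b₅⁻¹ * gammaNN n) :=
      permLen_le_three _ _ _ _ (by group)
    have c6 : permLen (gammaNN n) ≤ permLen b₈ + permLen (b₈⁻¹ * b₅)
        + permLen (b₅⁻¹ * gammaNN n) :=
      permLen_le_three _ _ _ _ (by group)
    have c3 : permLen (gammaNN n) ≤ permLen b₇ + permLen (b₇⁻¹ * b₄)
        + permLen (b₄⁻¹ * b₅) + permLen (b₅⁻¹ * gammaNN n) :=
      permLen_le_four _ _ _ _ _ (by group)
    have c4 : permLen (gammaNN n) ≤ permLen b₉ + permLen (b₉⁻¹ * b₆)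
        + permLen (b₆⁻¹ * b₅) + permLen (b₅⁻¹ * gammaNN n) :=
      permLen_le_four _ _ _ _ _ (by group)
    have i4 := permLen_inv_mul_comm b₄ (gammaNN n)
    have i5 := permLen_inv_mul_comm b₅ (gammaNN n)
    have i6 := permLen_inv_mul_comm b₆ (gammaNN n)
    have i58 := permLen_inv_mul_comm b₈ b₅
    have i47 := permLen_inv_mul_comm b₇ b₄
    have i69 := permLen_inv_mul_comm b₉ b₆
    have i56 := permLen_inv_mul_comm b₆ b₅
    simp only [latticeF]
    omega
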